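/- For every positive Horn sentence ψ in the language with one binary relation symbol E: ψ is true in every finite digraph satisfying ∀x∃y (E(x,y) ∧ E(y,x)) if and only if ψ is true in K₂, the digraph on {0,1} with edges (0,1) and (1,0). -/
import Mathlib


open FirstOrder Language

/-- Positive Horn bounded formulas over a relational language: built from atomic
formulas `R(v₁,…,vₙ)` (relation symbols applied to variables, no equality) using
only conjunction, existential quantification, and universal quantification. -/
inductive IsPH (L : FirstOrder.Language) : ∀ {n : ℕ}, L.BoundedFormula Empty n → Prop
  | rel {n l : ℕ} (R : L.Relations l) (v : Fin l → Fin n) :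
      IsPH L (BoundedFormula.rel R fun i => Term.var (Sum.inr (v i)))
  | inf {n : ℕ} {φ ψ : L.BoundedFormula Empty n} :
      IsPH L φ → IsPH L ψ → IsPH L (φ ⊓ ψ)
  | ex {n : ℕ} {φ : L.BoundedFormula Empty (n + 1)} : IsPH L φ → IsPH L φ.ex
  | all {n : ℕ} {φ : L.BoundedFormula Empty (n + 1)} : IsPH L φ → IsPH L φ.all

/-- `φ` is true in the `L`-structure on `M` given by `S`. -/
def RealizeIn (L : FirstOrder.Language) (M : Type*) (S : L.Structure M)
    (φ : L.Sentence) : Prop :=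
  @FirstOrder.Language.Sentence.Realize L M S φ

/-- The relation symbols of the language with a single binary relation symbol `E`. -/
inductive EdgeSym : ℕ → Type
  | edge : EdgeSym 2

/-- The relational language with one binary relation symbol `E`. -/
def Lgr : FirstOrder.Language := ⟨fun _ => Empty, EdgeSym⟩

/-- The `Lgr`-structure on `M` in which `E` is interpreted as the relation `r`. -/
def relStruct {M : Type*} (r : M → M → Prop) : Lgr.Structure M where
  funMap := fun f _ => Empty.elim f
  RelMap := fun R x =>
    match R, x with
    | EdgeSym.edge, x => r (x 0) (x 1)

def flip2 : Fin 2 → Fin 2 := fun a => a + 1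

lemma flip2_ne (a : Fin 2) : flip2 a ≠ a := by revert a; decide

lemma eq_flip2_of_ne {a b : Fin 2} (h : a ≠ b) : b = flip2 a := by revert a b; decide

lemma snoc_comm {n : ℕ} {I α : Type*} (f : Fin n → I → α) (g : I → α) (d : I) :
    (fun i => (Fin.snoc f g : Fin (n+1) → I → α) i d) = Fin.snoc (fun i => f i d) (g d) := by
  funext i
  refine Fin.lastCases ?_ (fun j => ?_) i <;>
    simp [Fin.snoc_last, Fin.snoc_castSucc]

lemma snoc_comp {n : ℕ} {I α β : Type*} (h : (I → α) → β) (f : Fin n → I → α) (g : I → α) :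
    (fun i => h ((Fin.snoc f g : Fin (n+1) → I → α) i)) = Fin.snoc (fun i => h (f i)) (h g) := by
  funext i
  refine Fin.lastCases ?_ (fun j => ?_) i <;>
    simp [Fin.snoc_last, Fin.snoc_castSucc]

lemma sim {D : Type} {ED : D → D → Prop} {I : Type}
    (h : (I → Fin 2) → D)
    (hh : ∀ f, ED (h f) (h (fun i => flip2 (f i))))
    (hsurj : ∀ x : D, ∃ f, h f = x)
    {n : ℕ} {φ : Lgr.BoundedFormula Empty n} (hφ : IsPH Lgr φ) :
    ∀ (f : Fin n → I → Fin 2),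
      (∀ d : I, @BoundedFormula.Realize Lgr (Fin 2)
          (relStruct (fun a b : Fin 2 => a ≠ b)) Empty n φ default (fun i => f i d)) →
      @BoundedFormula.Realize Lgr D (relStruct ED) Empty n φ default
        (fun i => h (f i)) := by
  letI SD : Lgr.Structure D := relStruct ED
  letI S2 : Lgr.Structure (Fin 2) := relStruct (fun a b : Fin 2 => a ≠ b)
  induction hφ with
  | @rel n l R v =>
    cases R
    intro f hf
    have hf' : ∀ d : I, f (v 0) d ≠ f (v 1) d := fun d => hf d
    have : f (v 1) = fun d => flip2 (f (v 0) d) := by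
      funext d; exact eq_flip2_of_ne (hf' d)
    show ED (h (f (v 0))) (h (f (v 1)))
    rw [this]
    exact hh _
  | inf _ _ ih1 ih2 =>
    intro f hf
    rw [BoundedFormula.realize_inf]
    simp only [BoundedFormula.realize_inf] at hf
    exact ⟨ih1 f fun d => (hf d).1, ih2 f fun d => (hf d).2⟩
  | @ex n φ _ ih =>
    intro f hf
    simp only [BoundedFormula.realize_ex] at hf ⊢
    choose g hg using hf
    refine ⟨h g, ?_⟩
    have := ih (Fin.snoc f g) (by
      intro d
      rw [snoc_comm]
      exact hg d)
    rwa [snoc_comp] at this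
  | @all n φ _ ih =>
    intro f hf
    simp only [BoundedFormula.realize_all] at hf ⊢
    intro x
    obtain ⟨g, rfl⟩ := hsurj x
    have := ih (Fin.snoc f g) (by
      intro d
      rw [snoc_comm]
      exact hf d (g d))
    rwa [snoc_comp] at this

noncomputable section
open Classical

def eFn {D : Type} (x : D) : D × Fin 2 → Fin 2 := fun p => if p.2 = 0 ∧ p.1 = x then 1 else 0

lemma eFn_one {D : Type} (x : D) (y : D) : eFn x (y, 1) = 0 := by
  simp [eFn]

lemma eFn_inj {D : Type} {x y : D} (h : eFn x = eFn y) : x = y := by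
  by_contra hne
  have := congrFun h (x, 0)
  simp [eFn, hne] at this

lemma flip2_inj : Function.Injective flip2 := by decide

lemma flip2_flip2 {I : Type} (f : I → Fin 2) : (fun i => flip2 (flip2 (f i))) = f := by
  funext i
  revert f; intro f; generalize f i = a; revert a; decide

def HFn {D : Type} (x₀ : D) (m : D → D) (f : D × Fin 2 → Fin 2) : D :=
  if hf : ∃ x, f = eFn x then hf.choose
  else if f (x₀, 1) = 0 then x₀
  else if hf2 : ∃ x, f = fun p => flip2 (eFn x p) then m hf2.choose
  else m x₀

lemma HFn_eFn {D : Type} (x₀ : D) (m : D → D) (x : D) : HFn x₀ m (eFn x) = x := by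
  have hex : ∃ z, eFn x = eFn z := ⟨x, rfl⟩
  rw [HFn, dif_pos hex]
  exact (eFn_inj hex.choose_spec).symm

lemma HFn_flip_eFn {D : Type} (x₀ : D) (m : D → D) (x : D) :
    HFn x₀ m (fun p => flip2 (eFn x p)) = m x := by
  have h1 : ¬∃ z, (fun p => flip2 (eFn x p)) = eFn z := by
    rintro ⟨z, hz⟩
    have := congrFun hz (x₀, 1)
    simp [eFn_one] at this
    exact absurd this (by decide)
  have h2 : ∃ z, (fun p => flip2 (eFn x p)) = fun p => flip2 (eFn z p) := ⟨x, rfl⟩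
  rw [HFn, dif_neg h1, if_neg (by simp [eFn_one]; decide), dif_pos h2]
  congr 1
  have := h2.choose_spec
  exact eFn_inj (funext fun p => flip2_inj (congrFun this.symm p))

lemma HFn_low {D : Type} (x₀ : D) (m : D → D) (f : D × Fin 2 → Fin 2)
    (h1 : ¬∃ x, f = eFn x) (h0 : f (x₀, 1) = 0) : HFn x₀ m f = x₀ := by
  rw [HFn, dif_neg h1, if_pos h0]

lemma HFn_high {D : Type} (x₀ : D) (m : D → D) (f : D × Fin 2 → Fin 2)
    (h2 : ¬∃ x, f = fun p => flip2 (eFn x p)) (h0 : f (x₀, 1) = 1) :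
    HFn x₀ m f = m x₀ := by
  have h1 : ¬∃ x, f = eFn x := by
    rintro ⟨x, rfl⟩
    rw [eFn_one] at h0
    exact absurd h0 (by decide)
  rw [HFn, dif_neg h1, if_neg (by rw [h0]; decide), dif_neg h2]

lemma HFn_adj {D : Type} (x₀ : D) (m : D → D) {ED : D → D → Prop}
    (hm1 : ∀ x, ED x (m x)) (hm2 : ∀ x, ED (m x) x) (f : D × Fin 2 → Fin 2) :
    ED (HFn x₀ m f) (HFn x₀ m (fun i => flip2 (f i))) := by
  by_cases h1 : ∃ x, f = eFn x
  · obtain ⟨x, rfl⟩ := h1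
    rw [HFn_eFn, HFn_flip_eFn]
    exact hm1 x
  by_cases h2 : ∃ x, f = fun p => flip2 (eFn x p)
  · obtain ⟨x, rfl⟩ := h2
    rw [HFn_flip_eFn]
    rw [show (fun i => flip2 (flip2 (eFn x i))) = eFn x from flip2_flip2 _, HFn_eFn]
    exact hm2 x
  by_cases h3 : f (x₀, 1) = 0
  · rw [HFn_low x₀ m f h1 h3]
    rw [HFn_high x₀ m _ ?_ (by rw [h3]; rfl)]
    · exact hm1 x₀
    · rintro ⟨x, hx⟩
      refine h1 ⟨x, ?_⟩
      have := congrArg (fun g => (fun i => flip2 (g i))) hx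
      simpa [flip2_flip2] using this
  · have h4 : f (x₀, 1) = 1 := by
      generalize f (x₀, 1) = a at h3 ⊢; revert a; decide
    rw [HFn_high x₀ m f h2 h4]
    rw [HFn_low x₀ m _ ?_ (by rw [h4]; rfl)]
    · exact hm2 x₀
    · rintro ⟨x, hx⟩
      refine h2 ⟨x, ?_⟩
      have := congrArg (fun g => (fun i => flip2 (g i))) hx
      simpa [flip2_flip2] using this

end

/-- A positive Horn sentence is true in every finite digraph satisfying
`∀x∃y (E(x,y) ∧ E(y,x))` if and only if it is true in `K₂`, the digraph on `{0,1}`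
with edges `(0,1)` and `(1,0)`. -/
theorem stmt18 (ψ : Lgr.Sentence) (hψ : IsPH Lgr ψ) :
    (∀ (D : Type) (ED : D → D → Prop), Finite D → Nonempty D →
      (∀ x : D, ∃ y : D, ED x y ∧ ED y x) → RealizeIn Lgr D (relStruct ED) ψ) ↔
    RealizeIn Lgr (Fin 2) (relStruct fun a b : Fin 2 => a ≠ b) ψ := by
  constructor
  · intro hK
    exact hK (Fin 2) (fun a b => a ≠ b) (by infer_instance) ⟨0⟩
      (fun x => ⟨flip2 x, fun h => flip2_ne x h.symm, flip2_ne x⟩)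
  · intro hK2 D ED _ hne hD
    classical
    obtain ⟨x₀⟩ := hne
    choose m hm1 hm2 using hD
    have key := sim (I := D × Fin 2) (HFn x₀ m)
      (HFn_adj x₀ m hm1 hm2) (fun x => ⟨eFn x, HFn_eFn x₀ m x⟩) hψ
      Fin.elim0
      (fun d => by
        have h2 := hK2
        unfold RealizeIn Sentence.Realize Formula.Realize at h2
        rw [show (fun i : Fin 0 => Fin.elim0 (α := D × Fin 2 → Fin 2) i d) =
            default from Subsingleton.elim _ _]
        convert h2 using 2)
    have e2 : (fun i : Fin 0 => HFn x₀ m (Fin.elim0 i)) =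
        (default : Fin 0 → D) := Subsingleton.elim _ _
    rw [e2] at key
    show @BoundedFormula.Realize Lgr D (relStruct ED) Empty 0 ψ default default
    convert key using 2
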